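/- Let L be a symmetric real n×n matrix with orthonormal eigenbasis v₁,…,vₙ and eigenvalues satisfying λ_i < 0 for i ≥ 2 and λ₁ = 0, and let ζ ∈ ℝⁿ satisfy v₁ᵀζ = 0. Then the improper integral ∫₀^∞ exp(Ls) ζζᵀ exp(Ls) ds converges and equals Σ_{i=2}^n Σ_{j=2}^n (-1/(λ_i+λ_j)) (v_iᵀζ)(ζᵀv_j) v_i v_jᵀ. -/

import Mathlib

open Matrix MeasureTheory

attribute [local instance] Matrix.linftyOpNormedRing Matrix.linftyOpNormedAlgebra

lemma int_exp (μ : ℝ) (h : μ < 0) : (∫ s in Set.Ioi (0:ℝ), Real.exp (μ * s)) = -1/μ := by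
  have hb : 0 < -μ := by linarith
  have h1 := integral_comp_mul_left_Ioi (fun x => Real.exp (-x)) 0 hb
  simp only [mul_zero, integral_exp_neg_Ioi_zero, smul_eq_mul, mul_one, neg_neg, neg_mul] at h1
  calc (∫ s in Set.Ioi (0:ℝ), Real.exp (μ * s)) = (-μ)⁻¹ := h1
    _ = -1/μ := by
      have hμ : μ ≠ 0 := ne_of_lt h
      field_simp

lemma exp_mulVec_eig {n : ℕ} (A : Matrix (Fin n) (Fin n) ℝ) (w : Fin n → ℝ) (μ : ℝ)
    (h : A.mulVec w = μ • w) :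
    (NormedSpace.exp A).mulVec w = Real.exp μ • w := by
  let f : Matrix (Fin n) (Fin n) ℝ →ₗ[ℝ] (Fin n → ℝ) :=
    { toFun := fun M => M.mulVec w
      map_add' := fun M N => Matrix.add_mulVec M N w
      map_smul' := fun c M => Matrix.smul_mulVec c M w }
  have hpow : ∀ k : ℕ, (A ^ k).mulVec w = μ ^ k • w := by
    intro k
    induction k with
    | zero => simp [Matrix.one_mulVec]
    | succ k ih =>
        rw [pow_succ, ← Matrix.mulVec_mulVec, h, Matrix.mulVec_smul, ih, pow_succ, smul_smul,
          mul_comm]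
  have hsum : Summable fun k : ℕ => ((k.factorial : ℝ)⁻¹) • A ^ k :=
    NormedSpace.expSeries_summable' A
  have key : f (NormedSpace.exp A) = ∑' k : ℕ, ((k.factorial : ℝ)⁻¹) • f (A ^ k) := by
    rw [NormedSpace.exp_eq_tsum ℝ]
    have := (f.toContinuousLinearMap).map_tsum hsum
    simpa using this
  have h2 : f (NormedSpace.exp A) = Real.exp μ • w := by
    rw [key]
    have heq : ∀ k : ℕ, ((k.factorial : ℝ)⁻¹) • f (A ^ k)
        = (((k.factorial : ℝ)⁻¹) * μ ^ k) • w := by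
      intro k; show ((k.factorial : ℝ)⁻¹) • (A ^ k).mulVec w = _
      rw [hpow k, smul_smul]
    rw [tsum_congr heq, Summable.tsum_smul_const
      (by simpa [smul_eq_mul] using NormedSpace.expSeries_summable' (𝕂 := ℝ) μ)]
    congr 1
    rw [Real.exp_eq_exp_ℝ, NormedSpace.exp_eq_tsum ℝ]
    simp [smul_eq_mul]
  exact h2

theorem stmt_5 (n : ℕ) [NeZero n] (L : Matrix (Fin n) (Fin n) ℝ) (hsym : L.IsSymm)
    (lam : Fin n → ℝ) (v : Fin n → Fin n → ℝ)
    (heig : ∀ i, L.mulVec (v i) = lam i • v i)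
    (horth : ∀ i j, v i ⬝ᵥ v j = if i = j then 1 else 0)
    (hlam0 : lam 0 = 0) (hv0 : ∀ l, v 0 l = 1 / Real.sqrt n)
    (hlamneg : ∀ i, i ≠ 0 → lam i < 0)
    (ζ : Fin n → ℝ) (hζ : v 0 ⬝ᵥ ζ = 0) :
    (∀ a b, MeasureTheory.IntegrableOn
        (fun s : ℝ => (NormedSpace.exp (s • L) * Matrix.vecMulVec ζ ζ *
          NormedSpace.exp (s • L)) a b) (Set.Ioi 0)) ∧
    (∀ a b,
      (∫ s in Set.Ioi (0:ℝ),
        (NormedSpace.exp (s • L) * Matrix.vecMulVec ζ ζ * NormedSpace.exp (s • L)) a b)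
      = (∑ i ∈ Finset.univ.filter (fun i : Fin n => i ≠ 0),
          ∑ j ∈ Finset.univ.filter (fun j : Fin n => j ≠ 0),
            ((-1) / (lam i + lam j) * (v i ⬝ᵥ ζ) * (ζ ⬝ᵥ v j)) •
              Matrix.vecMulVec (v i) (v j)) a b) := by
  classical
  set S : Finset (Fin n) := Finset.univ.filter (fun i : Fin n => i ≠ 0) with hS
  set c : Fin n → ℝ := fun i => v i ⬝ᵥ ζ with hc
  set E : ℝ → Matrix (Fin n) (Fin n) ℝ := fun s => NormedSpace.exp (s • L) with hE
  -- ζ expansion in eigenbasis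
  have hPtP : ∀ l m : Fin n, (∑ i, v i l * v i m) = if l = m then 1 else 0 := by
    intro l m
    set P : Matrix (Fin n) (Fin n) ℝ := Matrix.of v with hP
    have h1 : P * Pᵀ = 1 := by
      ext i j
      simpa [hP, Matrix.mul_apply, Matrix.one_apply, dotProduct] using horth i j
    have h2 : Pᵀ * P = 1 := mul_eq_one_comm.mp h1
    have := congrFun (congrFun h2 l) m
    simpa [hP, Matrix.mul_apply, Matrix.one_apply] using this
  have hζexp : ζ = ∑ i, c i • v i := by
    funext l
    rw [Finset.sum_apply]
    simp only [Pi.smul_apply, smul_eq_mul, hc]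
    have : ∀ i, (v i ⬝ᵥ ζ) * v i l = ∑ m, v i l * v i m * ζ m := by
      intro i
      simp only [dotProduct, Finset.sum_mul]
      exact Finset.sum_congr rfl fun m _ => by ring
    rw [Finset.sum_congr rfl fun i _ => this i, Finset.sum_comm]
    have : ∀ m, (∑ i, v i l * v i m * ζ m) = (if l = m then 1 else 0) * ζ m := by
      intro m; rw [← Finset.sum_mul, hPtP]
    rw [Finset.sum_congr rfl fun m _ => this m]
    simp
  -- action of exp on eigenvectors
  have heigE : ∀ s : ℝ, ∀ i, (E s).mulVec (v i) = Real.exp (s * lam i) • v i := by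
    intro s i
    apply exp_mulVec_eig
    rw [Matrix.smul_mulVec, heig, smul_smul]
  -- kernel applied to ζ
  have hker : ∀ s : ℝ, (E s).mulVec ζ = ∑ i ∈ S, (c i * Real.exp (s * lam i)) • v i := by
    intro s
    have h1 : (E s).mulVec ζ = ∑ i, c i • ((E s).mulVec (v i)) := by
      rw [hζexp]
      rw [show (E s).mulVec (∑ i, c i • v i) = (E s).mulVecLin (∑ i, c i • v i) from rfl]
      rw [map_sum]
      simp [Matrix.mulVecLin_apply, Matrix.mulVec_smul]
    rw [h1]
    have h2 : ∀ i, c i • ((E s).mulVec (v i)) = (c i * Real.exp (s * lam i)) • v i := by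
      intro i; rw [heigE s i, smul_smul]
    rw [Finset.sum_congr rfl fun i _ => h2 i]
    rw [hS, Finset.filter_ne', Finset.sum_erase]
    rw [show c 0 = 0 from hζ, zero_mul, zero_smul]
  -- symmetry of E s
  have hEsymm : ∀ s : ℝ, ∀ i j, E s i j = E s j i := by
    intro s i j
    have h1 : (s • L).IsSymm := by
      rw [Matrix.IsSymm, Matrix.transpose_smul, hsym]
    have h2 : (E s).IsSymm := Matrix.IsSymm.exp h1
    have := congrFun (congrFun h2 i) j
    simpa [Matrix.transpose_apply] using this.symm
  -- entrywise formula for the integrand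
  have hentry : ∀ s : ℝ, ∀ a b, (E s * Matrix.vecMulVec ζ ζ * E s) a b
      = ((E s).mulVec ζ) a * ((E s).mulVec ζ) b := by
    intro s a b
    simp only [Matrix.mul_apply, Matrix.vecMulVec_apply, Matrix.mulVec, dotProduct]
    rw [Finset.sum_mul_sum, Finset.sum_comm]
    refine Finset.sum_congr rfl fun m _ => ?_
    rw [Finset.sum_mul]
    refine Finset.sum_congr rfl fun k _ => ?_
    rw [hEsymm s b m]; ring
  -- the integrand as a double sum of exponentials
  have hfun : ∀ a b : Fin n, ∀ s : ℝ, (E s * Matrix.vecMulVec ζ ζ * E s) a b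
      = ∑ i ∈ S, ∑ j ∈ S,
          (c i * c j * v i a * v j b) * Real.exp ((lam i + lam j) * s) := by
    intro a b s
    rw [hentry s a b, hker s]
    simp only [Finset.sum_apply, Pi.smul_apply, smul_eq_mul]
    rw [Finset.sum_mul_sum]
    refine Finset.sum_congr rfl fun i _ => Finset.sum_congr rfl fun j _ => ?_
    rw [add_mul, Real.exp_add]
    ring_nf
  have hneg : ∀ i ∈ S, ∀ j ∈ S, lam i + lam j < 0 := by
    intro i hi j hj
    rw [hS, Finset.mem_filter] at hi hj
    have := hlamneg i hi.2; have := hlamneg j hj.2; linarith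
  -- integrability of each term
  have hint : ∀ a b : Fin n, ∀ i ∈ S, ∀ j ∈ S,
      MeasureTheory.IntegrableOn
        (fun s : ℝ => (c i * c j * v i a * v j b) * Real.exp ((lam i + lam j) * s))
        (Set.Ioi 0) := by
    intro a b i hi j hj
    have hμ := hneg i hi j hj
    have h1 : MeasureTheory.IntegrableOn
        (fun s : ℝ => Real.exp ((lam i + lam j) * s)) (Set.Ioi (0:ℝ)) := by
      have := exp_neg_integrableOn_Ioi 0 (b := -(lam i + lam j)) (by linarith)
      simpa [neg_neg] using this
    exact h1.const_mul _
  have hIntOn : ∀ a b, MeasureTheory.IntegrableOn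
      (fun s : ℝ => (E s * Matrix.vecMulVec ζ ζ * E s) a b) (Set.Ioi 0) := by
    intro a b
    have : MeasureTheory.IntegrableOn
        (fun s : ℝ => ∑ i ∈ S, ∑ j ∈ S,
          (c i * c j * v i a * v j b) * Real.exp ((lam i + lam j) * s)) (Set.Ioi 0) := by
      apply MeasureTheory.integrable_finset_sum
      intro i hi
      exact MeasureTheory.integrable_finset_sum _ fun j hj => hint a b i hi j hj
    exact this.congr_fun (fun s _ => (hfun a b s).symm) measurableSet_Ioi
  constructor
  · exact hIntOn
  · intro a b
    have h1 : (∫ s in Set.Ioi (0:ℝ), (E s * Matrix.vecMulVec ζ ζ * E s) a b)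
        = ∑ i ∈ S, ∑ j ∈ S, ∫ s in Set.Ioi (0:ℝ),
            (c i * c j * v i a * v j b) * Real.exp ((lam i + lam j) * s) := by
      rw [MeasureTheory.setIntegral_congr_fun measurableSet_Ioi (fun s _ => hfun a b s)]
      rw [MeasureTheory.integral_finset_sum _ (fun i hi =>
        MeasureTheory.integrable_finset_sum _ fun j hj => hint a b i hi j hj)]
      exact Finset.sum_congr rfl fun i hi =>
        MeasureTheory.integral_finset_sum _ fun j hj => hint a b i hi j hj
    rw [h1]
    simp only [Finset.sum_apply, Matrix.sum_apply, Matrix.smul_apply,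
      Matrix.vecMulVec_apply, smul_eq_mul]
    refine Finset.sum_congr rfl fun i hi => Finset.sum_congr rfl fun j hj => ?_
    rw [MeasureTheory.integral_const_mul, int_exp _ (hneg i hi j hj)]
    rw [show (ζ ⬝ᵥ v j) = c j from dotProduct_comm ζ (v j)]
    ring
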